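/- Let G be a graph with maximum degree 3, let S be a percolating set, and suppose the vertex v infected last by S (at time t = t(G,S)) has degree 2. Then G contains an induced path v_1, ..., v_t = v in which t(G,S,v_i) = i for all i, every vertex v_1, ..., v_{t-1} has degree 3 in G, and v has degree 2. -/

import Mathlib

open SimpleGraph

/-- One round of 2-neighbor bootstrap percolation: add every vertex with
at least two (distinct) infected neighbors. -/
def infectStep {V : Type} (G : SimpleGraph V) (S : Set V) : Set V :=
  S ∪ {v | ∃ u w, u ≠ w ∧ G.Adj v u ∧ G.Adj v w ∧ u ∈ S ∧ w ∈ S}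

/-- The infected set after `n` rounds starting from `S`. -/
def stage {V : Type} (G : SimpleGraph V) (S : Set V) : ℕ → Set V
  | 0 => S
  | n + 1 => infectStep G (stage G S n)

/-- `S` percolates: eventually every vertex is infected. -/
def Percolates {V : Type} (G : SimpleGraph V) (S : Set V) : Prop :=
  ∃ t, stage G S t = Set.univ

/-- The infection time of `v` (`⊤` if `v` is never infected). -/
noncomputable def infTime {V : Type} (G : SimpleGraph V) (S : Set V) (v : V) : ℕ∞ :=
  sInf {n : ℕ∞ | ∃ i : ℕ, n = (i : ℕ∞) ∧ v ∈ stage G S i}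

/-- The percolation time of a percolating set `S`. -/
noncomputable def percTime {V : Type} (G : SimpleGraph V) (S : Set V) : ℕ :=
  sInf {t | stage G S t = Set.univ}

/-- The maximum percolation time `t(G)`. -/
noncomputable def maxTime {V : Type} (G : SimpleGraph V) : ℕ :=
  sSup {t | ∃ S : Set V, Percolates G S ∧ percTime G S = t}

/-- `w` lists the vertices of an induced (chordless) path in `G`. -/
def IsInducedPath {V : Type} (G : SimpleGraph V) {n : ℕ} (w : Fin (n + 1) → V) : Prop :=
  Function.Injective w ∧
    ∀ i j : Fin (n + 1), G.Adj (w i) (w j) ↔ (i.1 + 1 = j.1 ∨ j.1 + 1 = i.1)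

noncomputable def firstTime {V : Type} (G : SimpleGraph V) (S : Set V) (u : V) : ℕ :=
  sInf {i | u ∈ stage G S i}

lemma stage_mono {V : Type} (G : SimpleGraph V) (S : Set V) {m n : ℕ} (h : m ≤ n) :
    stage G S m ⊆ stage G S n := by
  induction n, h using Nat.le_induction with
  | base => exact fun _ h => h
  | succ n h ih => exact fun x hx => Set.subset_union_left (ih hx)

lemma firstTime_le {V : Type} (G : SimpleGraph V) (S : Set V) {u : V} {i : ℕ}
    (h : u ∈ stage G S i) : firstTime G S u ≤ i := Nat.sInf_le h

lemma mem_stage_firstTime {V : Type} (G : SimpleGraph V) (S : Set V) {u : V}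
    (h : ∃ i, u ∈ stage G S i) : u ∈ stage G S (firstTime G S u) := Nat.sInf_mem h

lemma infTime_eq {V : Type} (G : SimpleGraph V) (S : Set V) (u : V)
    (h : ∃ i, u ∈ stage G S i) : infTime G S u = (firstTime G S u : ℕ∞) := by
  apply le_antisymm
  · exact sInf_le ⟨firstTime G S u, rfl, mem_stage_firstTime G S h⟩
  · apply le_sInf
    rintro n ⟨i, rfl, hi⟩
    exact_mod_cast firstTime_le G S hi

lemma exists_step {V : Type} (G : SimpleGraph V) (S : Set V)
    (u : V) (m : ℕ) (hu : firstTime G S u = m + 1) :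
    ∃ a b, a ≠ b ∧ G.Adj u a ∧ G.Adj u b ∧ firstTime G S a ≤ m ∧ firstTime G S b = m := by
  have hne : {i | u ∈ stage G S i}.Nonempty := by
    by_contra hc
    rw [Set.not_nonempty_iff_eq_empty] at hc
    rw [firstTime, hc, Nat.sInf_empty] at hu
    omega
  have hmem : u ∈ stage G S (m + 1) := by
    have := Nat.sInf_mem hne
    rwa [show sInf {i | u ∈ stage G S i} = m + 1 from hu] at this
  have hnot : u ∉ stage G S m := fun h => by
    have := firstTime_le G S h; omega
  have hstep : stage G S (m+1) = stage G S m ∪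
      {x | ∃ a b, a ≠ b ∧ G.Adj x a ∧ G.Adj x b ∧ a ∈ stage G S m ∧ b ∈ stage G S m} := rfl
  rw [hstep] at hmem
  rcases hmem with h | ⟨a, b, hab, h1, h2, ha, hb⟩
  · exact absurd h hnot
  have haN : firstTime G S a ≤ m := firstTime_le G S ha
  have hbN : firstTime G S b ≤ m := firstTime_le G S hb
  by_cases hb' : firstTime G S b = m
  · exact ⟨a, b, hab, h1, h2, haN, hb'⟩
  by_cases ha' : firstTime G S a = m
  · exact ⟨b, a, hab.symm, h2, h1, hbN, ha'⟩
  -- both strictly less than m; then u would be infected at time m already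
  exfalso
  obtain ⟨m', rfl⟩ : ∃ m', m = m' + 1 := by
    cases m with
    | zero => omega
    | succ m' => exact ⟨m', rfl⟩
  have ha2 : a ∈ stage G S m' :=
    stage_mono G S (by omega) (mem_stage_firstTime G S ⟨_, ha⟩)
  have hb2 : b ∈ stage G S m' :=
    stage_mono G S (by omega) (mem_stage_firstTime G S ⟨_, hb⟩)
  exact hnot (Or.inr ⟨a, b, hab, h1, h2, ha2, hb2⟩)

lemma exists_chain {V : Type} (G : SimpleGraph V) (S : Set V) :
    ∀ (t : ℕ) (v : V), firstTime G S v = t →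
    ∃ c : ℕ → V, c 0 = v ∧ (∀ k, k ≤ t → firstTime G S (c k) = t - k) ∧
      (∀ k, k + 1 ≤ t → G.Adj (c k) (c (k + 1))) := by
  intro t
  induction t with
  | zero =>
    intro v hv
    refine ⟨fun _ => v, rfl, ?_, ?_⟩
    · intro k hk
      interval_cases k
      simpa using hv
    · intro k hk; omega
  | succ t ih =>
    intro v hv
    obtain ⟨a, b, hab, h1, h2, ha, hb⟩ := exists_step G S v t hv
    obtain ⟨c, hc0, hcN, hcadj⟩ := ih b hb
    refine ⟨fun k => match k with | 0 => v | (k + 1) => c k, rfl, ?_, ?_⟩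
    · intro k hk
      match k with
      | 0 => simpa using hv
      | (k + 1) =>
        have := hcN k (by omega)
        simpa [Nat.succ_sub_succ] using this
    · intro k hk
      match k with
      | 0 => show G.Adj v (c 0); rw [hc0]; exact h2
      | (k + 1) => exact hcadj k (by omega)

lemma four_le_degree {V : Type} [Fintype V] [DecidableEq V] (G : SimpleGraph V)
    [DecidableRel G.Adj] {u a b c d : V}
    (h1 : G.Adj u a) (h2 : G.Adj u b) (h3 : G.Adj u c) (h4 : G.Adj u d)
    (hab : a ≠ b) (hac : a ≠ c) (had : a ≠ d) (hbc : b ≠ c) (hbd : b ≠ d) (hcd : c ≠ d) :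
    4 ≤ G.degree u := by
  have hsub : ({a, b, c, d} : Finset V) ⊆ G.neighborFinset u := by
    intro x hx
    simp only [Finset.mem_insert, Finset.mem_singleton] at hx
    rcases hx with rfl | rfl | rfl | rfl <;> simpa [mem_neighborFinset]
  have hcard : ({a, b, c, d} : Finset V).card = 4 := by
    rw [Finset.card_insert_of_notMem (by simp [hab, hac, had]),
        Finset.card_insert_of_notMem (by simp [hbc, hbd]),
        Finset.card_insert_of_notMem (by simp [hcd]), Finset.card_singleton]
  calc 4 = ({a, b, c, d} : Finset V).card := hcard.symm
    _ ≤ (G.neighborFinset u).card := Finset.card_le_card hsub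
    _ = G.degree u := G.card_neighborFinset_eq_degree u

lemma three_le_degree {V : Type} [Fintype V] [DecidableEq V] (G : SimpleGraph V)
    [DecidableRel G.Adj] {u a b c : V}
    (h1 : G.Adj u a) (h2 : G.Adj u b) (h3 : G.Adj u c)
    (hab : a ≠ b) (hac : a ≠ c) (hbc : b ≠ c) :
    3 ≤ G.degree u := by
  have hsub : ({a, b, c} : Finset V) ⊆ G.neighborFinset u := by
    intro x hx
    simp only [Finset.mem_insert, Finset.mem_singleton] at hx
    rcases hx with rfl | rfl | rfl <;> simpa [mem_neighborFinset]
  have hcard : ({a, b, c} : Finset V).card = 3 := by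
    rw [Finset.card_insert_of_notMem (by simp [hab, hac]),
        Finset.card_insert_of_notMem (by simp [hbc]), Finset.card_singleton]
  calc 3 = ({a, b, c} : Finset V).card := hcard.symm
    _ ≤ (G.neighborFinset u).card := Finset.card_le_card hsub
    _ = G.degree u := G.card_neighborFinset_eq_degree u

theorem stmt3 {V : Type} [Fintype V] [DecidableEq V] (G : SimpleGraph V) [DecidableRel G.Adj]
    (hmax : ∀ u, G.degree u ≤ 3) (S : Set V) (hperc : Percolates G S)
    (v : V) (t : ℕ) (ht1 : 1 ≤ t) (ht : percTime G S = t)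
    (hvt : infTime G S v = (t : ℕ∞)) (hdeg : G.degree v = 2) :
    ∃ w : Fin t → V, w ⟨t - 1, by omega⟩ = v ∧
      Function.Injective w ∧
      (∀ i j : Fin t, G.Adj (w i) (w j) ↔ (i.1 + 1 = j.1 ∨ j.1 + 1 = i.1)) ∧
      (∀ i : Fin t, infTime G S (w i) = ((i.1 + 1 : ℕ) : ℕ∞)) ∧
      (∀ i : Fin t, i.1 < t - 1 → G.degree (w i) = 3) := by
  have hall : ∀ u : V, ∃ i, u ∈ stage G S i := by
    obtain ⟨t0, ht0⟩ := hperc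
    exact fun u => ⟨t0, ht0.symm ▸ Set.mem_univ u⟩
  have hvft : firstTime G S v = t := by
    have h := infTime_eq G S v (hall v)
    rw [hvt] at h
    exact_mod_cast h.symm
  obtain ⟨c, hc0, hcN, hcadj⟩ := exists_chain G S t v hvft
  set w : Fin t → V := fun i => c (t - 1 - i.1) with hw
  have hwN : ∀ i : Fin t, firstTime G S (w i) = i.1 + 1 := by
    intro i
    have h := hcN (t - 1 - i.1) (by omega)
    have h2 : t - (t - 1 - i.1) = i.1 + 1 := by omega
    rw [h2] at h
    exact h
  have hwadj : ∀ i j : Fin t, j.1 = i.1 + 1 → G.Adj (w i) (w j) := by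
    intro i j hij
    have hk : (t - 1 - j.1) + 1 ≤ t := by omega
    have h := hcadj (t - 1 - j.1) hk
    have e1 : t - 1 - i.1 = (t - 1 - j.1) + 1 := by omega
    show G.Adj (c (t - 1 - i.1)) (c (t - 1 - j.1))
    rw [e1]
    exact h.symm
  have hne : ∀ (i j : Fin t) (x : V), firstTime G S x ≠ i.1 + 1 → x ≠ w j → True := fun _ _ _ _ _ => trivial
  -- no chords
  have key : ∀ i j : Fin t, i.1 + 2 ≤ j.1 → ¬ G.Adj (w i) (w j) := by
    intro i j hij hadj
    obtain ⟨a, b, hab, h1, h2, ha, hb⟩ := exists_step G S (w i) i.1 (hwN i)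
    have hi1 : i.1 + 1 < t := by omega
    set i' : Fin t := ⟨i.1 + 1, hi1⟩ with hi'
    have hadj3 : G.Adj (w i) (w i') := hwadj i i' rfl
    have hNi' : firstTime G S (w i') = i.1 + 2 := hwN i'
    have hNj : firstTime G S (w j) = j.1 + 1 := hwN j
    have d1 : a ≠ w i' := fun h => by rw [h, hNi'] at ha; omega
    have d2 : a ≠ w j := fun h => by rw [h, hNj] at ha; omega
    have d3 : b ≠ w i' := fun h => by rw [h] at hb; rw [hb] at hNi'; omega
    have d4 : b ≠ w j := fun h => by rw [h] at hb; rw [hb] at hNj; omega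
    have d5 : w i' ≠ w j := fun h => by rw [h, hNj] at hNi'; omega
    have := four_le_degree G h1 h2 hadj3 hadj hab d1 d2 d3 d4 d5
    have := hmax (w i)
    omega
  refine ⟨w, ?_, ?_, ?_, ?_, ?_⟩
  · show c (t - 1 - (t - 1)) = v
    rw [Nat.sub_self]
    exact hc0
  · intro i j h
    have hi := hwN i
    rw [h, hwN j] at hi
    exact Fin.ext (by omega)
  · intro i j
    constructor
    · intro hadj
      rcases Nat.lt_trichotomy i.1 j.1 with hlt | heq | hgt
      · by_cases h : i.1 + 1 = j.1
        · exact Or.inl h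
        · exact absurd hadj (key i j (by omega))
      · exfalso
        have : i = j := Fin.ext heq
        rw [this] at hadj
        exact G.loopless.irrefl _ hadj
      · by_cases h : j.1 + 1 = i.1
        · exact Or.inr h
        · exact absurd hadj.symm (key j i (by omega))
    · rintro (h | h)
      · exact hwadj i j h.symm
      · exact (hwadj j i h.symm).symm
  · intro i
    rw [infTime_eq G S _ (hall _), hwN i]
  · intro i hilt
    have hi1 : i.1 + 1 < t := by omega
    set i' : Fin t := ⟨i.1 + 1, hi1⟩ with hi'
    obtain ⟨a, b, hab, h1, h2, ha, hb⟩ := exists_step G S (w i) i.1 (hwN i)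
    have hadj3 : G.Adj (w i) (w i') := hwadj i i' rfl
    have hNi' : firstTime G S (w i') = i.1 + 2 := hwN i'
    have d1 : a ≠ w i' := fun h => by rw [h, hNi'] at ha; omega
    have d3 : b ≠ w i' := fun h => by rw [h] at hb; rw [hb] at hNi'; omega
    have := three_le_degree G h1 h2 hadj3 hab d1 d3
    have := hmax (w i)
    omega
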